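/- Let V = F_p^n and let G ≤ Aff(V) satisfy Hypothesis (*). Let {1} = G_0 ◁ G_1 ◁ ⋯ ◁ G_m = G be any composition series of G. Then for each 1 ≤ i ≤ m: (i) the pair (G_i, V) also satisfies Hypothesis (*); and (ii) the simple group G_i/G_{i−1} has a soluble subgroup of index p^s for some s ≥ 0. -/

import Mathlib

/-- The vector space `𝔽_p^n`. -/
abbrev V (p n : ℕ) : Type := Fin n → ZMod p

/-- The affine group `Aff(V) = V ⋊ GL(V)` of `V = 𝔽_p^n`, realised as the group of
affine self-equivalences of `V`; the pair `(v, A)` corresponds to `w ↦ A w + v` and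
acts on `V` by evaluation. -/
abbrev Aff (p n : ℕ) : Type := V p n ≃ᵃ[ZMod p] V p n

/-- The stabiliser of the point `v` in a subgroup `G ≤ Aff(V)`. -/
def affStab {p n : ℕ} (G : Subgroup (Aff p n)) (v : V p n) : Subgroup (Aff p n) where
  carrier := {g | g ∈ G ∧ g v = v}
  one_mem' := ⟨G.one_mem, rfl⟩
  mul_mem' := by
    rintro a b ⟨haG, hav⟩ ⟨hbG, hbv⟩
    refine ⟨G.mul_mem haG hbG, ?_⟩
    show a (b v) = v
    rw [hbv, hav]
  inv_mem' := by
    rintro a ⟨haG, hav⟩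
    refine ⟨G.inv_mem haG, ?_⟩
    have h1 : (a⁻¹ * a) v = a⁻¹ (a v) := rfl
    rw [inv_mul_cancel] at h1
    rw [hav] at h1
    exact h1.symm

/-- Hypothesis (*): for each `v ∈ V`, the stabiliser of `v` in `G` is a soluble
subgroup of `p`-power index in `G`. -/
def HypStar (p n : ℕ) (G : Subgroup (Aff p n)) : Prop :=
  ∀ v : V p n, IsSolvable (affStab G v) ∧ ∃ s : ℕ, (affStab G v).relIndex G = p ^ s


theorem relIndex_dvd_index_of_normal' {Γ : Type*} [Group Γ] [Finite Γ]
    (N K : Subgroup Γ) [hN : N.Normal] : K.relIndex N ∣ K.index := by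
  have hb : N.relIndex K ≠ 0 := by
    haveI : Finite (K ⧸ N.subgroupOf K) := Quotient.finite _
    exact Subgroup.index_ne_zero_of_finite
  have h1 : K.relIndex N * N.relIndex K = (K ⊓ N).relIndex (N ⊔ K) := by
    rw [← Subgroup.inf_relIndex_right K N,
      ← Subgroup.relIndex_sup_left (K := N) (H := K),
      Subgroup.relIndex_mul_relIndex (K ⊓ N) N (N ⊔ K) inf_le_right le_sup_left]
  have h2 : N.relIndex K * K.relIndex (N ⊔ K) = (K ⊓ N).relIndex (N ⊔ K) := by
    rw [← Subgroup.inf_relIndex_right N K, inf_comm N K,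
      Subgroup.relIndex_mul_relIndex (K ⊓ N) K (N ⊔ K) inf_le_left le_sup_right]
  have h3 : K.relIndex N = K.relIndex (N ⊔ K) := by
    have h := h1.trans h2.symm
    rw [mul_comm] at h
    exact Nat.eq_of_mul_eq_mul_left (Nat.pos_of_ne_zero hb) h
  rw [h3]
  exact Subgroup.relIndex_dvd_index_of_le le_sup_right

instance affFinite (p n : ℕ) [NeZero p] : Finite (Aff p n) :=
  Finite.of_injective _ (AffineEquiv.toEquiv_injective (k := ZMod p) (P₁ := V p n) (P₂ := V p n))

theorem affStab_eq_inf {p n : ℕ} {H Γ : Subgroup (Aff p n)} (hle : H ≤ Γ) (v : V p n) :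
    affStab H v = H ⊓ affStab Γ v := by
  ext g
  constructor
  · rintro ⟨hg, hv⟩; exact ⟨hg, hle hg, hv⟩
  · rintro ⟨hg, _, hv⟩; exact ⟨hg, hv⟩

theorem affStab_le {p n : ℕ} (Γ : Subgroup (Aff p n)) (v : V p n) : affStab Γ v ≤ Γ :=
  fun _ hg => hg.1

/-- Hypothesis (*) passes to normal subgroups. -/
theorem hypStar_of_normal {p n : ℕ} (hp : p.Prime) {H Γ : Subgroup (Aff p n)}
    (hle : H ≤ Γ) (hnorm : (H.subgroupOf Γ).Normal) (hΓ : HypStar p n Γ) :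
    HypStar p n H := by
  haveI : Fact p.Prime := ⟨hp⟩
  intro v
  obtain ⟨hsol, s, hs⟩ := hΓ v
  have hstab : affStab H v = H ⊓ affStab Γ v := affStab_eq_inf hle v
  constructor
  · haveI : Group.IsSolvable (affStab Γ v) := hsol
    have hsub : affStab H v ≤ affStab Γ v := by rw [hstab]; exact inf_le_right
    exact solvable_of_solvable_injective (Subgroup.inclusion_injective hsub)
  · have hdvd : (affStab H v).relIndex H ∣ p ^ s := by
      rw [hstab, Subgroup.inf_relIndex_left]
      rw [← Subgroup.relIndex_subgroupOf (L := Γ) hle]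
      haveI := hnorm
      have := relIndex_dvd_index_of_normal' (H.subgroupOf Γ) ((affStab Γ v).subgroupOf Γ)
      rw [show ((affStab Γ v).subgroupOf Γ).index = (affStab Γ v).relIndex Γ from rfl, hs] at this
      exact this
    obtain ⟨t, _, ht⟩ := (Nat.dvd_prime_pow hp).mp hdvd
    exact ⟨t, ht⟩

/-- Lemma 6.3: let `G ≤ Aff(V)` satisfy Hypothesis (*) and let
`{1} = G₀ ◁ G₁ ◁ ⋯ ◁ G_m = G` be any composition series of `G`.  Then for each
`1 ≤ i ≤ m`: (i) the pair `(G_i, V)` also satisfies Hypothesis (*); and (ii) the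
simple group `G_i/G_{i-1}` has a soluble subgroup of index `p^s` for some `s ≥ 0`. -/
theorem stmt_14 (p n : ℕ) (hp : p.Prime) (G : Subgroup (Aff p n))
    (hG : HypStar p n G)
    (m : ℕ) (c : Fin (m + 1) → Subgroup (Aff p n))
    (hc0 : c 0 = ⊥) (hcm : c (Fin.last m) = G)
    (hle : ∀ i : Fin m, c i.castSucc ≤ c i.succ)
    (hnorm : ∀ i : Fin m, ((c i.castSucc).subgroupOf (c i.succ)).Normal)
    (hsimple : ∀ i : Fin m,
      letI := hnorm i
      IsSimpleGroup (c i.succ ⧸ (c i.castSucc).subgroupOf (c i.succ))) :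
    ∀ i : Fin m,
      HypStar p n (c i.succ) ∧
      (letI := hnorm i
       ∃ S : Subgroup (c i.succ ⧸ (c i.castSucc).subgroupOf (c i.succ)),
         IsSolvable S ∧ ∃ s : ℕ, S.index = p ^ s) := by

  haveI : Fact p.Prime := ⟨hp⟩
  -- Every term of the series satisfies (*), by downward induction.
  have key : ∀ k : ℕ, ∀ j : Fin (m + 1), (j : ℕ) + k = m → HypStar p n (c j) := by
    intro k
    induction k with
    | zero =>
      intro j hj
      have : j = Fin.last m := Fin.ext (by simpa using hj)
      rw [this, hcm]; exact hG
    | succ k ih =>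
      intro j hj
      have hjm : (j : ℕ) < m := by omega
      set i : Fin m := ⟨(j : ℕ), hjm⟩ with hi
      have hcast : i.castSucc = j := Fin.ext rfl
      have hsuccval : ((i.succ : Fin (m + 1)) : ℕ) + k = m := by
        simp [Fin.val_succ, hi]; omega
      have hnext : HypStar p n (c i.succ) := ih i.succ hsuccval
      have := hypStar_of_normal hp (hle i) (hnorm i) hnext
      rwa [hcast] at this
  intro i
  have hsucc : HypStar p n (c i.succ) := by
    refine key (m - ((i : ℕ) + 1)) i.succ ?_
    have := i.isLt
    simp [Fin.val_succ]
  refine ⟨hsucc, ?_⟩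
  letI := hnorm i
  set Γ := c i.succ
  set N := (c i.castSucc).subgroupOf Γ
  set π := QuotientGroup.mk' N
  set K : Subgroup Γ := (affStab Γ 0).subgroupOf Γ with hK
  obtain ⟨hsol, s, hs⟩ := hsucc 0
  refine ⟨K.map π, ?_, ?_⟩
  · haveI : Group.IsSolvable K := by
      haveI : Group.IsSolvable (affStab Γ 0) := hsol
      exact solvable_of_surjective
        (f := (Subgroup.subgroupOfEquivOfLe (affStab_le Γ 0)).symm.toMonoidHom)
        (Subgroup.subgroupOfEquivOfLe (affStab_le Γ 0)).symm.surjective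
    have hrange : (π.comp K.subtype).range = K.map π := by
      rw [MonoidHom.range_comp, Subgroup.range_subtype]
    rw [← hrange]
    exact solvable_of_surjective (π.comp K.subtype).rangeRestrict_surjective
  · have hdvd : (K.map π).index ∣ K.index :=
      K.index_map_dvd (QuotientGroup.mk'_surjective N)
    have hKindex : K.index = p ^ s := hs
    rw [hKindex] at hdvd
    obtain ⟨t, _, ht⟩ := (Nat.dvd_prime_pow hp).mp hdvd
    exact ⟨t, ht⟩
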